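/- (Recursion for the server-side model shift under contractive compression.) Suppose w^{t+1} = w^t + 𝒞^P(x^{t+1} − w^t) where 𝒞^P is a contractive compressor with parameter α_P applied conditionally. Then: E‖w^{t+1} − x^{t+1}‖² ≤ (1 − α_P/2)·E‖w^t − x^t‖² + (2/α_P)·E‖x^{t+1} − x^t‖². -/

import Mathlib

open MeasureTheory


private lemma aux_young (α x y : ℝ) (h0 : 0 < α) (h1 : α ≤ 1) :
    (1 - α) * (x + y) ^ 2 ≤ (1 - α / 2) * x ^ 2 + (2 / α) * y ^ 2 := by
  have key : α * ((1 - α) * (x + y) ^ 2) ≤ α * ((1 - α / 2) * x ^ 2) + 2 * y ^ 2 := by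
    nlinarith [sq_nonneg (α * x - 2 * (1 - α) * y),
      mul_nonneg (mul_nonneg h0.le (by linarith : (0:ℝ) ≤ 3 - α)) (sq_nonneg y)]
  calc (1 - α) * (x + y) ^ 2 = (α * ((1 - α) * (x + y) ^ 2)) / α := by
        field_simp
    _ ≤ (α * ((1 - α / 2) * x ^ 2) + 2 * y ^ 2) / α := by
        gcongr
    _ = (1 - α / 2) * x ^ 2 + (2 / α) * y ^ 2 := by
        field_simp

/-- Recursion for the server-side model shift under contractive compression. -/
theorem server_shift_recursion_contractive
    {d : ℕ}
    -- contractive compressor with parameter αP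
    (αP : ℝ) (hαP0 : 0 < αP) (hαP1 : αP ≤ 1)
    {Ωc : Type*} [MeasurableSpace Ωc] (νc : Measure Ωc) [IsProbabilityMeasure νc]
    (C : EuclideanSpace ℝ (Fin d) → Ωc → EuclideanSpace ℝ (Fin d))
    (hCmeas : Measurable fun q : EuclideanSpace ℝ (Fin d) × Ωc => C q.1 q.2)
    (hCint : ∀ z, Integrable (fun wc => ‖C z wc - z‖ ^ 2) νc)
    (hCcontr : ∀ z, ∫ wc, ‖C z wc - z‖ ^ 2 ∂νc ≤ (1 - αP) * ‖z‖ ^ 2)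
    -- past randomness and random vectors
    {Ω₀ : Type*} [MeasurableSpace Ω₀] (μ₀ : Measure Ω₀) [IsProbabilityMeasure μ₀]
    (xt xt1 wt : Ω₀ → EuclideanSpace ℝ (Fin d))
    (hxtm : Measurable xt) (hxt1m : Measurable xt1) (hwtm : Measurable wt)
    -- the new server-side model: compressed model shift applied conditionally
    (wt1 : Ω₀ × Ωc → EuclideanSpace ℝ (Fin d))
    (hwt1 : ∀ w, wt1 w = wt w.1 + C (xt1 w.1 - wt w.1) w.2)
    -- integrability of the relevant squared norms
    (hint1 : Integrable
      (fun w : Ω₀ × Ωc => ‖wt1 w - xt1 w.1‖ ^ 2) (μ₀.prod νc))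
    (hint2 : Integrable (fun ω₀ => ‖wt ω₀ - xt ω₀‖ ^ 2) μ₀)
    (hint3 : Integrable (fun ω₀ => ‖xt1 ω₀ - xt ω₀‖ ^ 2) μ₀) :
    ∫ w, ‖wt1 w - xt1 w.1‖ ^ 2 ∂(μ₀.prod νc)
      ≤ (1 - αP / 2) * ∫ ω₀, ‖wt ω₀ - xt ω₀‖ ^ 2 ∂μ₀
        + (2 / αP) * ∫ ω₀, ‖xt1 ω₀ - xt ω₀‖ ^ 2 ∂μ₀ := by

  rw [MeasureTheory.integral_prod _ hint1]
  have key : ∀ ω₀, (∫ wc, ‖wt1 (ω₀, wc) - xt1 ω₀‖ ^ 2 ∂νc)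
      ≤ (1 - αP / 2) * ‖wt ω₀ - xt ω₀‖ ^ 2 + (2 / αP) * ‖xt1 ω₀ - xt ω₀‖ ^ 2 := by
    intro ω₀
    set z : EuclideanSpace ℝ (Fin d) := xt1 ω₀ - wt ω₀ with hzdef
    have hz : ∀ wc, wt1 (ω₀, wc) - xt1 ω₀ = C z wc - z := by
      intro wc
      rw [hwt1 (ω₀, wc)]
      simp only [hzdef]
      abel
    have h1 : (∫ wc, ‖wt1 (ω₀, wc) - xt1 ω₀‖ ^ 2 ∂νc) = ∫ wc, ‖C z wc - z‖ ^ 2 ∂νc := by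
      simp_rw [hz]
    rw [h1]
    refine (hCcontr z).trans ?_
    have hnz : ‖z‖ ≤ ‖wt ω₀ - xt ω₀‖ + ‖xt1 ω₀ - xt ω₀‖ := by
      have : z = (xt1 ω₀ - xt ω₀) - (wt ω₀ - xt ω₀) := by simp only [hzdef]; abel
      rw [this]
      refine (norm_sub_le _ _).trans ?_
      rw [add_comm]
    have h2 : (1 - αP) * ‖z‖ ^ 2
        ≤ (1 - αP) * (‖wt ω₀ - xt ω₀‖ + ‖xt1 ω₀ - xt ω₀‖) ^ 2 := by
      apply mul_le_mul_of_nonneg_left _ (by linarith)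
      exact pow_le_pow_left₀ (norm_nonneg _) hnz 2
    exact h2.trans (aux_young αP _ _ hαP0 hαP1)
  have hInt : Integrable (fun ω₀ => ∫ wc, ‖wt1 (ω₀, wc) - xt1 ω₀‖ ^ 2 ∂νc) μ₀ :=
    hint1.integral_prod_left
  calc (∫ ω₀, ∫ wc, ‖wt1 (ω₀, wc) - xt1 ω₀‖ ^ 2 ∂νc ∂μ₀)
      ≤ ∫ ω₀, ((1 - αP / 2) * ‖wt ω₀ - xt ω₀‖ ^ 2 + (2 / αP) * ‖xt1 ω₀ - xt ω₀‖ ^ 2) ∂μ₀ := by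
        exact integral_mono hInt ((hint2.const_mul _).add (hint3.const_mul _)) key
    _ = (1 - αP / 2) * ∫ ω₀, ‖wt ω₀ - xt ω₀‖ ^ 2 ∂μ₀
        + (2 / αP) * ∫ ω₀, ‖xt1 ω₀ - xt ω₀‖ ^ 2 ∂μ₀ := by
        rw [integral_add ((hint2.const_mul _)) ((hint3.const_mul _)),
          integral_const_mul, integral_const_mul]
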